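/- (Key comparison step in Ahlfors' proof.) Let u : 𝔻 → ℝ be twice continuously differentiable on the open unit disk and suppose Δu(z) ≥ 4·e^{2u(z)} for all z ∈ 𝔻, where Δ is the standard Laplacian on ℝ² ≅ ℂ. Then for every R ∈ (0,1) and every z with |z| < R, one has e^{u(z)} ≤ R/(R² − |z|²). -/

import Mathlib

open Complex Filter Topology

/-- The standard Laplacian on `ℝ² ≅ ℂ`: `Δu = ∂²u/∂x² + ∂²u/∂y²`, written as the sum of
second directional derivatives in the directions `1` and `i`. -/
noncomputable def laplacian (u : ℂ → ℝ) (z : ℂ) : ℝ :=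
  fderiv ℝ (fun w : ℂ => fderiv ℝ u w 1) z 1 +
    fderiv ℝ (fun w : ℂ => fderiv ℝ u w Complex.I) z Complex.I

lemma contDiffAt_deriv {φ : ℝ → ℝ} {t : ℝ} (h : ContDiffAt ℝ 2 φ t) :
    ContDiffAt ℝ 1 (deriv φ) t := by
  have hfd : ContDiffAt ℝ 1 (fderiv ℝ φ) t := h.fderiv_right (by norm_num)
  have h2 : ContDiffAt ℝ 1 (fun s => fderiv ℝ φ s 1) t := hfd.clm_apply contDiffAt_const
  have heq : deriv φ = fun s => fderiv ℝ φ s 1 := by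
    funext s; rw [fderiv_apply_one_eq_deriv]
  rw [heq]; exact h2

lemma second_deriv_nonpos_of_isLocalMax {φ : ℝ → ℝ} (hφ : ContDiffAt ℝ 2 φ 0)
    (hmax : IsLocalMax φ 0) : deriv (deriv φ) 0 ≤ 0 := by
  by_contra hpos
  push_neg at hpos
  have h1 : deriv φ 0 = 0 := hmax.deriv_eq_zero
  have hD : DifferentiableAt ℝ (deriv φ) 0 := (contDiffAt_deriv hφ).differentiableAt one_ne_zero
  have hslope : Tendsto (slope (deriv φ) 0) (𝓝[≠] 0) (𝓝 (deriv (deriv φ) 0)) :=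
    hasDerivAt_iff_tendsto_slope.1 hD.hasDerivAt
  have hpos' : ∀ᶠ s in 𝓝[>] (0:ℝ), 0 < slope (deriv φ) 0 s :=
    (hslope.mono_left (nhdsWithin_mono _ fun x hx => ne_of_gt hx)).eventually
      (eventually_gt_nhds hpos)
  have hder_pos : ∀ᶠ s in 𝓝[>] (0:ℝ), 0 < deriv φ s := by
    filter_upwards [hpos', self_mem_nhdsWithin] with s hs hs'
    have hs0 : (0:ℝ) < s := hs'
    have hslope_eq : slope (deriv φ) 0 s = deriv φ s / s := by
      rw [slope_def_field, h1]; ring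
    rw [hslope_eq] at hs
    rcases div_pos_iff.mp hs with ⟨h,_⟩|⟨_,h⟩ <;> linarith
  have hcd : ∀ᶠ s in 𝓝 (0:ℝ), ContDiffAt ℝ 2 φ s := hφ.eventually (by norm_num)
  obtain ⟨ε, hε, hball⟩ := Metric.eventually_nhds_iff.mp (hcd.and hmax)
  obtain ⟨ε₂, hε₂, hball₂⟩ := Metric.mem_nhdsWithin_iff.mp hder_pos
  set δ := min ε ε₂ / 2 with hδ
  have hδpos : 0 < δ := by positivity
  have hδε : δ < ε := by
    have := min_le_left ε ε₂; simp only [hδ]; linarith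
  have hδε₂ : δ < ε₂ := by
    have := min_le_right ε ε₂; simp only [hδ]; linarith
  have hIccsub : ∀ s ∈ Set.Icc (0:ℝ) δ, dist s (0:ℝ) < ε := by
    intro s hs
    rw [Real.dist_eq, sub_zero, _root_.abs_of_nonneg hs.1]
    linarith [hs.2]
  have hcont : ContinuousOn φ (Set.Icc 0 δ) := by
    intro s hs
    exact ((hball (hIccsub s hs)).1.continuousAt).continuousWithinAt
  have hderiv_pos : ∀ s ∈ interior (Set.Icc (0:ℝ) δ), 0 < deriv φ s := by
    intro s hs
    rw [interior_Icc] at hs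
    apply hball₂
    constructor
    · rw [Metric.mem_ball, Real.dist_eq, sub_zero, _root_.abs_of_pos hs.1]
      linarith [hs.2]
    · exact hs.1
  have hmono : StrictMonoOn φ (Set.Icc 0 δ) :=
    strictMonoOn_of_deriv_pos (convex_Icc 0 δ) hcont hderiv_pos
  have hlt : φ 0 < φ δ :=
    hmono (Set.left_mem_Icc.2 hδpos.le) (Set.right_mem_Icc.2 hδpos.le) hδpos
  have hle : φ δ ≤ φ 0 := by
    have hd : dist δ (0:ℝ) < ε := by
      rw [Real.dist_eq, sub_zero, _root_.abs_of_pos hδpos]; exact hδε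
    exact (hball hd).2
  linarith

lemma deriv2_sub {φ ψ : ℝ → ℝ} (hφ : ContDiffAt ℝ 2 φ 0) (hψ : ContDiffAt ℝ 2 ψ 0) :
    deriv (deriv (fun t => φ t - ψ t)) 0 = deriv (deriv φ) 0 - deriv (deriv ψ) 0 := by
  have h1 : (fun t => deriv (fun s => φ s - ψ s) t) =ᶠ[𝓝 (0:ℝ)]
      fun t => deriv φ t - deriv ψ t := by
    filter_upwards [hφ.eventually (by norm_num), hψ.eventually (by norm_num)] with t h1 h2
    exact deriv_sub (h1.differentiableAt (by norm_num)) (h2.differentiableAt (by norm_num))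
  rw [h1.deriv_eq]
  exact deriv_fun_sub ((contDiffAt_deriv hφ).differentiableAt one_ne_zero)
    ((contDiffAt_deriv hψ).differentiableAt one_ne_zero)

lemma deriv2_line {w : ℂ → ℝ} {z : ℂ} (e : ℂ) (hw : ContDiffAt ℝ 2 w z) :
    deriv (deriv (fun t : ℝ => w (z + t • e))) 0 = fderiv ℝ (fun y => fderiv ℝ w y e) z e := by
  have hline : ∀ t : ℝ, HasDerivAt (fun s : ℝ => z + s • e) e t := by
    intro t
    simpa using ((hasDerivAt_id t).smul_const e).const_add z
  have h0 : z + (0:ℝ) • e = z := by simp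
  have hts : Tendsto (fun t : ℝ => z + t • e) (𝓝 0) (𝓝 z) := by
    have := (hline 0).continuousAt.tendsto
    rwa [h0] at this
  have hwev : ∀ᶠ y in 𝓝 z, ContDiffAt ℝ 2 w y := hw.eventually (by norm_num)
  have hev : (fun t : ℝ => deriv (fun s : ℝ => w (z + s • e)) t)
      =ᶠ[𝓝 (0:ℝ)] fun t => fderiv ℝ w (z + t • e) e := by
    filter_upwards [hts.eventually hwev] with t ht
    have hdw : HasFDerivAt w (fderiv ℝ w (z + t • e)) (z + t • e) :=
      (ht.differentiableAt (by norm_num)).hasFDerivAt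
    exact (hdw.comp_hasDerivAt t (hline t)).deriv
  rw [hev.deriv_eq]
  have hg : DifferentiableAt ℝ (fderiv ℝ w) z :=
    (hw.fderiv_right (le_refl 2) : ContDiffAt ℝ 1 (fderiv ℝ w) z).differentiableAt one_ne_zero
  have hgf : HasFDerivAt (fderiv ℝ w) (fderiv ℝ (fderiv ℝ w) z) (z + (0:ℝ) • e) := by
    rw [h0]; exact hg.hasFDerivAt
  have h2 : HasDerivAt (fun t : ℝ => fderiv ℝ w (z + t • e)) (fderiv ℝ (fderiv ℝ w) z e) 0 :=
    hgf.comp_hasDerivAt 0 (hline 0)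
  have h3 : HasDerivAt (fun t : ℝ => fderiv ℝ w (z + t • e) e)
      ((fderiv ℝ (fderiv ℝ w) z e) e) 0 := by
    simpa using h2.clm_apply (hasDerivAt_const (0:ℝ) e)
  rw [h3.deriv]
  rw [fderiv_clm_apply hg (differentiableAt_const e)]
  simp

lemma aux1d (a c x : ℝ) (hc : 0 < c - x ^ 2) :
    deriv (deriv (fun t : ℝ => a + -Real.log (c - (x + t) ^ 2))) 0
      = (2 * (c - x ^ 2) + 4 * x ^ 2) / (c - x ^ 2) ^ 2 := by
  rw [deriv_const_add']
  have hd : ∀ t : ℝ, HasDerivAt (fun s : ℝ => c - (x + s) ^ 2) (-(2 * (x + t))) t := by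
    intro t
    have h1 : HasDerivAt (fun s : ℝ => (x + s) ^ 2) (2 * (x + t)) t := by
      have := ((hasDerivAt_id t).const_add x).fun_pow 2
      simpa using this
    simpa using h1.const_sub c
  have hcont : Continuous fun s : ℝ => c - (x + s) ^ 2 := by continuity
  have h00 : (0:ℝ) < c - (x + 0) ^ 2 := by simpa using hc
  have hev : ∀ᶠ t in 𝓝 (0:ℝ), 0 < c - (x + t) ^ 2 :=
    (hcont.tendsto 0).eventually (eventually_gt_nhds h00)
  have hev' : (fun t : ℝ => deriv (fun s : ℝ => -Real.log (c - (x + s) ^ 2)) t)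
      =ᶠ[𝓝 (0:ℝ)] fun t => 2 * (x + t) / (c - (x + t) ^ 2) := by
    filter_upwards [hev] with t ht
    have hder := ((hd t).log (ne_of_gt ht)).fun_neg
    rw [hder.deriv]
    ring
  rw [hev'.deriv_eq]
  have hne : c - (x + (0:ℝ)) ^ 2 ≠ 0 := ne_of_gt h00
  have hnum : HasDerivAt (fun t : ℝ => 2 * (x + t)) 2 0 := by
    simpa using ((hasDerivAt_id (0:ℝ)).const_add x).const_mul 2
  have hdiv := hnum.fun_div (hd 0) hne
  rw [hdiv.deriv]
  rw [add_zero] at *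
  field_simp
  ring

/-- Key comparison step in Ahlfors' proof: if `u` is C² on the unit disk and
`Δu ≥ 4·e^{2u}` (i.e. the conformal metric `e^u|dz|` has curvature `≤ -1`), then `e^{u(z)}`
is dominated by the density `R/(R² - |z|²)` of the Poincaré metric of `D(0,R)`. -/
theorem ahlfors_comparison (u : ℂ → ℝ)
    (hu : ContDiffOn ℝ 2 u (Metric.ball (0 : ℂ) 1))
    (hcurv : ∀ z ∈ Metric.ball (0 : ℂ) 1, 4 * Real.exp (2 * u z) ≤ laplacian u z) :
    ∀ R : ℝ, R ∈ Set.Ioo (0 : ℝ) 1 → ∀ z : ℂ, ‖z‖ < R →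
      Real.exp (u z) ≤ R / (R ^ 2 - ‖z‖ ^ 2) := by
  intro R hR z hz
  obtain ⟨hR0, hR1⟩ := hR
  have hKsub : Metric.closedBall (0:ℂ) R ⊆ Metric.ball (0:ℂ) 1 := by
    intro w hw
    simp only [Metric.mem_closedBall, Metric.mem_ball, dist_zero_right] at *
    linarith
  have hcont_u : ContinuousOn u (Metric.closedBall (0:ℂ) R) := hu.continuousOn.mono hKsub
  set F : ℂ → ℝ := fun w => (R ^ 2 - Complex.normSq w) * Real.exp (u w) with hF
  have hFcont : ContinuousOn F (Metric.closedBall (0:ℂ) R) :=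
    ((continuous_const.sub Complex.continuous_normSq).continuousOn).mul
      (Real.continuous_exp.comp_continuousOn hcont_u)
  have h0K : (0:ℂ) ∈ Metric.closedBall (0:ℂ) R := by
    simp [le_of_lt hR0]
  obtain ⟨z₀, hz₀K, hz₀max⟩ := (isCompact_closedBall (0:ℂ) R).exists_isMaxOn ⟨0, h0K⟩ hFcont
  have hF0 : 0 < F 0 := by
    have h2 : (0:ℝ) < R ^ 2 := by positivity
    simp only [hF, Complex.normSq_zero, sub_zero]
    exact mul_pos h2 (Real.exp_pos _)
  have hmax0 : F 0 ≤ F z₀ := hz₀max h0K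
  have hfz₀ : 0 < R ^ 2 - Complex.normSq z₀ := by
    by_contra h
    push_neg at h
    have hFz₀ : F z₀ = (R ^ 2 - Complex.normSq z₀) * Real.exp (u z₀) := rfl
    nlinarith [Real.exp_pos (u z₀), hF0, hmax0, hFz₀]
  have hz₀ball : z₀ ∈ Metric.ball (0:ℂ) R := by
    simp only [Metric.mem_ball, dist_zero_right]
    nlinarith [Complex.sq_norm z₀, norm_nonneg z₀]
  have hz₀1 : z₀ ∈ Metric.ball (0:ℂ) 1 := hKsub hz₀K
  set V : ℂ → ℝ := fun w => Real.log R - Real.log (R ^ 2 - Complex.normSq w) with hV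
  have hposball : ∀ w : ℂ, w ∈ Metric.ball (0:ℂ) R → 0 < R ^ 2 - Complex.normSq w := by
    intro w hw
    simp only [Metric.mem_ball, dist_zero_right] at hw
    nlinarith [Complex.sq_norm w, norm_nonneg w]
  have key : ∀ y : ℂ, 0 < R ^ 2 - Complex.normSq y → F y = R * Real.exp (u y - V y) := by
    intro y hy
    rw [Real.exp_sub, hV]
    simp only
    rw [Real.exp_sub, Real.exp_log hR0, Real.exp_log hy, hF]
    field_simp
  -- h := u - V has a local max at z₀
  have hmaxh : IsLocalMax (fun w => u w - V w) z₀ := by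
    have hball : Metric.ball (0:ℂ) R ∈ 𝓝 z₀ := Metric.isOpen_ball.mem_nhds hz₀ball
    filter_upwards [hball] with w hw
    have hfw := hposball w hw
    have hFle : F w ≤ F z₀ := hz₀max (Metric.ball_subset_closedBall hw)
    rw [key w hfw, key z₀ hfz₀] at hFle
    have := (mul_le_mul_iff_right₀ hR0).mp hFle
    exact Real.exp_le_exp.mp this
  have hu₀ : ContDiffAt ℝ 2 u z₀ := hu.contDiffAt (Metric.isOpen_ball.mem_nhds hz₀1)
  have hVcd : ContDiffAt ℝ 2 V z₀ := by
    rw [hV]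
    apply ContDiffAt.sub contDiffAt_const
    have hg : ContDiffAt ℝ 2 (fun w : ℂ => R ^ 2 - Complex.normSq w) z₀ := by
      apply ContDiffAt.sub contDiffAt_const
      have : ContDiff ℝ 2 (fun w : ℂ => Complex.normSq w) := by
        simp only [Complex.normSq_apply]
        exact (Complex.reCLM.contDiff.mul Complex.reCLM.contDiff).add
          (Complex.imCLM.contDiff.mul Complex.imCLM.contDiff)
      exact this.contDiffAt
    exact hg.log (ne_of_gt hfz₀)
  have hcomp : ∀ (w : ℂ → ℝ), ContDiffAt ℝ 2 w z₀ → ∀ e : ℂ,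
      ContDiffAt ℝ 2 (fun t : ℝ => w (z₀ + t • e)) 0 := by
    intro w hw e
    have hlin : ContDiff ℝ 2 (fun t : ℝ => z₀ + t • e) :=
      contDiff_const.add (contDiff_id.smul contDiff_const)
    have h0 : z₀ + (0:ℝ) • e = z₀ := by simp
    have hw' : ContDiffAt ℝ 2 w ((fun t : ℝ => z₀ + t • e) 0) := by simpa using hw
    exact hw'.comp 0 hlin.contDiffAt
  have hlinemax : ∀ e : ℂ, IsLocalMax (fun t : ℝ => u (z₀ + t • e) - V (z₀ + t • e)) 0 := by
    intro e
    have h0 : z₀ + (0:ℝ) • e = z₀ := by simp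
    have hc : Continuous (fun t : ℝ => z₀ + t • e) :=
      continuous_const.add (continuous_id.smul continuous_const)
    have htt : Tendsto (fun t : ℝ => z₀ + t • e) (𝓝 0) (𝓝 z₀) := by
      have := hc.tendsto 0
      rwa [h0] at this
    show ∀ᶠ t in 𝓝 (0:ℝ), u (z₀ + t • e) - V (z₀ + t • e)
      ≤ u (z₀ + (0:ℝ) • e) - V (z₀ + (0:ℝ) • e)
    filter_upwards [htt.eventually hmaxh] with t ht
    simpa [h0] using ht
  have hkey : ∀ e : ℂ, deriv (deriv (fun t : ℝ => u (z₀ + t • e))) 0 ≤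
      deriv (deriv (fun t : ℝ => V (z₀ + t • e))) 0 := by
    intro e
    have hu' := hcomp u hu₀ e
    have hV' := hcomp V hVcd e
    have hle := second_deriv_nonpos_of_isLocalMax (hu'.sub hV') (hlinemax e)
    rw [deriv2_sub hu' hV'] at hle
    linarith
  -- compute the second derivatives of V along the lines
  have hnormSq : Complex.normSq z₀ = z₀.re ^ 2 + z₀.im ^ 2 := by
    rw [Complex.normSq_apply]; ring
  have hc1 : 0 < (R ^ 2 - z₀.im ^ 2) - z₀.re ^ 2 := by rw [hnormSq] at hfz₀; linarith
  have hcI : 0 < (R ^ 2 - z₀.re ^ 2) - z₀.im ^ 2 := by rw [hnormSq] at hfz₀; linarith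
  have hEq1 : (fun t : ℝ => V (z₀ + t • (1:ℂ)))
      = fun t : ℝ => Real.log R + -Real.log ((R ^ 2 - z₀.im ^ 2) - (z₀.re + t) ^ 2) := by
    funext t
    rw [hV]
    simp only [Complex.normSq_apply, Complex.add_re, Complex.add_im, Complex.real_smul,
      Complex.mul_re, Complex.mul_im, Complex.one_re, Complex.one_im, Complex.ofReal_re,
      Complex.ofReal_im, sub_eq_add_neg]
    ring_nf
  have hEqI : (fun t : ℝ => V (z₀ + t • Complex.I))
      = fun t : ℝ => Real.log R + -Real.log ((R ^ 2 - z₀.re ^ 2) - (z₀.im + t) ^ 2) := by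
    funext t
    rw [hV]
    simp only [Complex.normSq_apply, Complex.add_re, Complex.add_im, Complex.real_smul,
      Complex.mul_re, Complex.mul_im, Complex.I_re, Complex.I_im, Complex.ofReal_re,
      Complex.ofReal_im, sub_eq_add_neg]
    ring_nf
  have hb1 : deriv (deriv (fun t : ℝ => V (z₀ + t • (1:ℂ)))) 0
      = (2 * ((R ^ 2 - z₀.im ^ 2) - z₀.re ^ 2) + 4 * z₀.re ^ 2)
        / ((R ^ 2 - z₀.im ^ 2) - z₀.re ^ 2) ^ 2 := by
    rw [hEq1]; exact aux1d _ _ _ hc1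
  have hbI : deriv (deriv (fun t : ℝ => V (z₀ + t • Complex.I))) 0
      = (2 * ((R ^ 2 - z₀.re ^ 2) - z₀.im ^ 2) + 4 * z₀.im ^ 2)
        / ((R ^ 2 - z₀.re ^ 2) - z₀.im ^ 2) ^ 2 := by
    rw [hEqI]; exact aux1d _ _ _ hcI
  -- laplacian of u at z₀ equals sum of second line derivatives
  have hlap : laplacian u z₀ = deriv (deriv (fun t : ℝ => u (z₀ + t • (1:ℂ)))) 0
      + deriv (deriv (fun t : ℝ => u (z₀ + t • Complex.I))) 0 := by
    rw [laplacian, deriv2_line (1:ℂ) hu₀, deriv2_line Complex.I hu₀]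
  -- combine
  have hcurv₀ := hcurv z₀ hz₀1
  set f₀ := R ^ 2 - Complex.normSq z₀ with hf₀
  have hsum : laplacian u z₀ ≤ 4 * R ^ 2 / f₀ ^ 2 := by
    rw [hlap]
    have h1 := hkey 1
    have h2 := hkey Complex.I
    rw [hb1] at h1
    rw [hbI] at h2
    have heq : (2 * ((R ^ 2 - z₀.im ^ 2) - z₀.re ^ 2) + 4 * z₀.re ^ 2)
        / ((R ^ 2 - z₀.im ^ 2) - z₀.re ^ 2) ^ 2
        + (2 * ((R ^ 2 - z₀.re ^ 2) - z₀.im ^ 2) + 4 * z₀.im ^ 2)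
        / ((R ^ 2 - z₀.re ^ 2) - z₀.im ^ 2) ^ 2 = 4 * R ^ 2 / f₀ ^ 2 := by
      rw [hf₀, hnormSq]
      have hA : (R ^ 2 - z₀.im ^ 2) - z₀.re ^ 2 ≠ 0 := ne_of_gt hc1
      have hB : (R ^ 2 - z₀.re ^ 2) - z₀.im ^ 2 ≠ 0 := ne_of_gt hcI
      have hC : R ^ 2 - (z₀.re ^ 2 + z₀.im ^ 2) ≠ 0 := by
        intro h; linarith [hc1]
      field_simp
      ring
    linarith
  -- conclude u z₀ ≤ V z₀, i.e. F z₀ ≤ R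
  have hexp2 : Real.exp (2 * u z₀) ≤ R ^ 2 / f₀ ^ 2 := by
    have h4 : 4 * (R ^ 2 / f₀ ^ 2) = 4 * R ^ 2 / f₀ ^ 2 := by ring
    linarith
  have hFz₀R : F z₀ ≤ R := by
    have he : Real.exp (2 * u z₀) = Real.exp (u z₀) ^ 2 := by
      rw [two_mul, Real.exp_add]; ring
    have hsq : (f₀ * Real.exp (u z₀)) ^ 2 ≤ R ^ 2 := by
      rw [mul_pow]
      have := mul_le_mul_of_nonneg_left hexp2 (le_of_lt (pow_pos hfz₀ 2))
      rw [he] at this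
      calc f₀ ^ 2 * Real.exp (u z₀) ^ 2 ≤ f₀ ^ 2 * (R ^ 2 / f₀ ^ 2) := this
        _ = R ^ 2 := by field_simp
    have hFnn : 0 ≤ f₀ * Real.exp (u z₀) := le_of_lt (mul_pos hfz₀ (Real.exp_pos _))
    have : f₀ * Real.exp (u z₀) ≤ R := by nlinarith
    simpa [hF, hf₀] using this
  -- finish
  have hzK : z ∈ Metric.closedBall (0:ℂ) R := by
    simp only [Metric.mem_closedBall, dist_zero_right]
    exact le_of_lt hz
  have hFz : F z ≤ R := le_trans (hz₀max hzK) hFz₀R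
  have hfz : 0 < R ^ 2 - ‖z‖ ^ 2 := by
    nlinarith [norm_nonneg z]
  rw [le_div_iff₀ hfz]
  have : F z = Real.exp (u z) * (R ^ 2 - ‖z‖ ^ 2) := by
    rw [hF, Complex.sq_norm]; ring
  linarith [hFz, this ▸ hFz]
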